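/- Let k ≥ 987 be a squarefree odd integer with k ≥ (log x_2)^{7/5} where x_2 > exp(exp(30)). If q_1 > q_2 > ... > q_l are the prime factors of k, then the product prod_{j=1}^{l} (q_j - 1)/(q_j - 2) < 1.51479 * (e^{gamma} log log k + 5/(2 log log k)), assuming phi(k) > k/(e^{gamma} log log k + 5/(2 log log k)) and prod over all primes p of (p-1)^2/(p(p-2)) restricted to primes dividing k is at most prod_{p odd prime} (p-1)^2/(p(p-2)) < 1.51479. -/

import Mathlib

open Real

theorem prod_ratio_prime_factors_bound (k : ℕ) (x₂ : ℝ)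
    (hk : 987 ≤ k) (hsf : Squarefree k) (hodd : Odd k)
    (hx₂ : x₂ > Real.exp (Real.exp 30))
    (hklarge : (k : ℝ) ≥ (Real.log x₂) ^ ((7 : ℝ) / 5))
    (hphi : (Nat.totient k : ℝ) >
      (k : ℝ) / (Real.exp Real.eulerMascheroniConstant * Real.log (Real.log k)
        + 5 / (2 * Real.log (Real.log k))))
    (hprod : ∏ p ∈ k.primeFactors, ((p : ℝ) - 1) ^ 2 / ((p : ℝ) * ((p : ℝ) - 2))
      < 1.51479) :
    ∏ p ∈ k.primeFactors, ((p : ℝ) - 1) / ((p : ℝ) - 2) <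
      1.51479 * (Real.exp Real.eulerMascheroniConstant * Real.log (Real.log k)
        + 5 / (2 * Real.log (Real.log k))) := by
  set E : ℝ := Real.exp Real.eulerMascheroniConstant * Real.log (Real.log k)
        + 5 / (2 * Real.log (Real.log k)) with hE
  -- primes dividing k are odd, hence ≥ 3
  have h3 : ∀ p ∈ k.primeFactors, 3 ≤ p := by
    intro p hp
    have hpp := Nat.prime_of_mem_primeFactors hp
    have hpd := Nat.dvd_of_mem_primeFactors hp
    rcases hpp.eq_two_or_odd' with h2 | hoddp
    · exfalso
      subst h2
      exact (Nat.not_even_iff_odd.mpr hodd) (even_iff_two_dvd.mpr hpd)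
    · have := hpp.two_le
      rcases Nat.odd_iff.mp hoddp with h
      omega
  -- log log k > 0
  have hk0 : (0:ℕ) < k := by omega
  have hlogk : Real.log k > 3 := by
    have : (Real.exp 3) < (k:ℝ) := by
      have h1 : Real.exp 3 < 21 := by
        have e1 := Real.exp_one_lt_d9
        have e1p := Real.exp_pos 1
        have e2 : Real.exp 2 = Real.exp 1 * Real.exp 1 := by
          rw [← Real.exp_add]; norm_num
        have e3 : Real.exp 3 = Real.exp 2 * Real.exp 1 := by
          rw [← Real.exp_add]; norm_num
        nlinarith
      have h2 : (987:ℝ) ≤ (k:ℝ) := by exact_mod_cast hk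
      linarith
    calc (3:ℝ) = Real.log (Real.exp 3) := (Real.log_exp 3).symm
    _ < Real.log k := Real.log_lt_log (Real.exp_pos 3) this
  have hllk : Real.log (Real.log k) > 1 := by
    have : Real.log (Real.log k) > Real.log 3 :=
      Real.log_lt_log (by norm_num) hlogk
    have h3l : Real.log 3 > 1 := by
      have := Real.exp_one_lt_d9
      have : Real.exp 1 < 3 := by linarith
      calc (1:ℝ) = Real.log (Real.exp 1) := (Real.log_exp 1).symm
      _ < Real.log 3 := Real.log_lt_log (Real.exp_pos 1) this
    linarith
  have hEpos : 0 < E := by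
    rw [hE]
    have h1 : 0 < Real.exp Real.eulerMascheroniConstant := Real.exp_pos _
    have h2 : 0 < 5 / (2 * Real.log (Real.log k)) := by positivity
    nlinarith
  -- φ(k) = ∏ (p - 1)
  have hphi_eq : (Nat.totient k : ℝ) = ∏ p ∈ k.primeFactors, ((p:ℝ) - 1) := by
    have h1 : Nat.totient k = ∏ p ∈ k.primeFactors, (p - 1) := by
      rw [Nat.totient_eq_div_primeFactors_mul,
        Nat.prod_primeFactors_of_squarefree hsf, Nat.div_self hk0, one_mul]
    rw [h1]
    push_cast [Finset.prod_natCast]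
    refine Finset.prod_congr rfl fun p hp => ?_
    have := h3 p hp
    have : (1:ℕ) ≤ p := by omega
    push_cast [Nat.cast_sub this]
    ring
  have hk_eq : (k : ℝ) = ∏ p ∈ k.primeFactors, (p:ℝ) := by
    rw [← Nat.cast_prod, Nat.prod_primeFactors_of_squarefree hsf]
  -- product splitting
  have hsplit : ∏ p ∈ k.primeFactors, ((p : ℝ) - 1) / ((p : ℝ) - 2) =
      ((k:ℝ) / (Nat.totient k : ℝ)) *
        ∏ p ∈ k.primeFactors, ((p : ℝ) - 1) ^ 2 / ((p : ℝ) * ((p : ℝ) - 2)) := by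
    rw [hphi_eq, hk_eq, ← Finset.prod_div_distrib, ← Finset.prod_mul_distrib]
    refine Finset.prod_congr rfl fun p hp => ?_
    have hp3 : (3:ℝ) ≤ (p:ℝ) := by exact_mod_cast h3 p hp
    have h1 : (p:ℝ) - 1 ≠ 0 := by linarith
    have h2 : (p:ℝ) - 2 ≠ 0 := by linarith
    have h0 : (p:ℝ) ≠ 0 := by linarith
    field_simp
  have hphipos : (0:ℝ) < (Nat.totient k : ℝ) := by
    exact_mod_cast Nat.totient_pos.mpr hk0
  have hratio : (k:ℝ) / (Nat.totient k : ℝ) < E := by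
    rw [div_lt_iff₀ hphipos]
    have h := (div_lt_iff₀ hEpos).mp hphi
    linarith [h]
  have hApos : 0 < ∏ p ∈ k.primeFactors, ((p : ℝ) - 1) ^ 2 / ((p : ℝ) * ((p : ℝ) - 2)) := by
    refine Finset.prod_pos fun p hp => ?_
    have hp3 : (3:ℝ) ≤ (p:ℝ) := by exact_mod_cast h3 p hp
    have : (0:ℝ) < (p:ℝ) - 1 := by linarith
    have : (0:ℝ) < (p:ℝ) - 2 := by linarith
    positivity
  rw [hsplit]
  calc ((k:ℝ) / (Nat.totient k : ℝ)) *
        ∏ p ∈ k.primeFactors, ((p : ℝ) - 1) ^ 2 / ((p : ℝ) * ((p : ℝ) - 2))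
      < E * 1.51479 := by
        apply mul_lt_mul' (le_of_lt hratio) hprod (le_of_lt hApos) hEpos
  _ = 1.51479 * E := by ring
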